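/- For any real numbers α > -1, β > -1, any c > 0, and C > 1, there exist constants depending only on α, β, c, C such that for every integer n ≥ 1 and every real t with 1/C ≤ t ≤ 1 - c/n, the sum ∑_{j=1}^{n} (n+1-j)^β j^α t^j is bounded above and below by constant multiples of n^β (1-t)^{-(α+1)}. -/

import Mathlib

open Finset Real

lemma auxE0 {p : ℝ} (hp0 : 0 < p) (hp1 : p ≤ 1) {y : ℝ} (hy : 1 ≤ y) :
    (y - 1) ^ p + p * y ^ (p - 1) ≤ y ^ p := by
  have hy0 : 0 < y := lt_of_lt_of_le zero_lt_one hy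
  have hs : -1 ≤ -(1/y) := by
    rw [neg_le_neg_iff]
    exact div_le_one_of_le₀ hy hy0.le
  have hb := rpow_one_add_le_one_add_mul_self hs hp0.le hp1
  have he : (1 : ℝ) + -(1/y) = (y - 1)/y := by field_simp; ring
  rw [he] at hb
  rw [Real.div_rpow (by linarith : (0:ℝ) ≤ y - 1) hy0.le] at hb
  have hyp : (0:ℝ) < y ^ p := Real.rpow_pos_of_pos hy0 p
  rw [div_le_iff₀ hyp] at hb
  have h4 : y ^ p / y = y ^ (p - 1) := by rw [Real.rpow_sub hy0, Real.rpow_one]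
  have h3 : (1 + p * -(1/y)) * y ^ p = y ^ p - p * (y ^ p / y) := by field_simp; ring
  rw [h3, h4] at hb
  linarith

lemma auxE1 (γ : ℝ) (hγ : -1 < γ) :
    ∃ K : ℝ, 0 < K ∧ ∀ J : ℕ, ∑ j ∈ Icc 1 J, (j:ℝ) ^ γ ≤ K * (J:ℝ) ^ (γ + 1) := by
  rcases le_or_gt 0 γ with hγ0 | hγ0
  · refine ⟨1, one_pos, fun J => ?_⟩
    rcases Nat.eq_zero_or_pos J with rfl | hJ
    · simp [Real.rpow_nonneg]
    have hJR : (1:ℝ) ≤ (J:ℝ) := by exact_mod_cast hJ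
    have hJ0 : (0:ℝ) < (J:ℝ) := by linarith
    calc ∑ j ∈ Icc 1 J, (j:ℝ) ^ γ ≤ ∑ _j ∈ Icc 1 J, (J:ℝ) ^ γ := by
          refine Finset.sum_le_sum fun j hj => ?_
          have := (Finset.mem_Icc.mp hj)
          exact Real.rpow_le_rpow (by positivity) (by exact_mod_cast this.2) hγ0
      _ = (J : ℝ) * (J:ℝ) ^ γ := by
          rw [Finset.sum_const, Nat.card_Icc]; simp [nsmul_eq_mul]
      _ = 1 * (J:ℝ) ^ (γ + 1) := by
          rw [one_mul, Real.rpow_add_one hJ0.ne', mul_comm]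
  · set p := γ + 1 with hp
    have hp0 : 0 < p := by linarith
    have hp1 : p ≤ 1 := by linarith
    refine ⟨1/p, by positivity, fun J => ?_⟩
    induction J with
    | zero => simp [Real.zero_rpow hp0.ne']
    | succ J ih =>
      rw [Finset.sum_Icc_succ_top (Nat.one_le_iff_ne_zero.mpr (Nat.succ_ne_zero J))]
      have hJnn : (0:ℝ) ≤ (J:ℝ) := Nat.cast_nonneg J
      have hy : (1:ℝ) ≤ (J:ℝ) + 1 := by linarith
      have key := auxE0 hp0 hp1 hy
      have hco : ((J:ℝ) + 1) - 1 = (J:ℝ) := by ring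
      rw [hco] at key
      have hγp : γ = p - 1 := by rw [hp]; ring
      rw [← hγp] at key
      have hcast : ((J + 1 : ℕ) : ℝ) = (J:ℝ) + 1 := by push_cast; ring
      rw [hcast]
      have key2 : (1/p) * ((J:ℝ)^p) + ((J:ℝ)+1)^γ ≤ (1/p) * (((J:ℝ)+1)^p) := by
        have h := mul_le_mul_of_nonneg_left key (by positivity : (0:ℝ) ≤ 1/p)
        have he : (1/p) * ((J:ℝ)^p + p * ((J:ℝ)+1)^γ) = (1/p) * (J:ℝ)^p + ((J:ℝ)+1)^γ := by
          rw [mul_add, ← mul_assoc, one_div, inv_mul_cancel₀ hp0.ne', one_mul]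
        rw [he] at h
        exact h
      linarith

lemma auxE4 {t : ℝ} (h0 : 0 ≤ t) (h1 : t < 1) (F : Finset ℕ) : ∑ j ∈ F, t ^ j ≤ (1 - t)⁻¹ :=
  sum_le_hasSum F (fun i _ => pow_nonneg h0 i) (hasSum_geometric_of_lt_one h0 h1)

lemma auxE5 (k : ℕ) {x : ℝ} (hx : 0 ≤ x) : x ^ k * Real.exp (-x) ≤ (Nat.factorial k : ℝ) := by
  have h := Real.pow_div_factorial_le_exp x hx k
  have hfac : (0:ℝ) < (Nat.factorial k : ℝ) := by positivity
  rw [div_le_iff₀ hfac] at h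
  calc x ^ k * Real.exp (-x) ≤ (Real.exp x * (Nat.factorial k : ℝ)) * Real.exp (-x) :=
        mul_le_mul_of_nonneg_right h (Real.exp_nonneg _)
    _ = (Nat.factorial k : ℝ) * (Real.exp x * Real.exp (-x)) := by ring
    _ = (Nat.factorial k : ℝ) := by rw [← Real.exp_add]; simp

lemma auxE6 (γ : ℝ) {x lo hi : ℝ} (hlo : 0 < lo) (h1 : lo ≤ x) (h2 : x ≤ hi) :
    min (lo ^ γ) (hi ^ γ) ≤ x ^ γ ∧ x ^ γ ≤ max (lo ^ γ) (hi ^ γ) := by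
  have hx : 0 < x := lt_of_lt_of_le hlo h1
  rcases le_or_gt 0 γ with hγ | hγ
  · exact ⟨(min_le_left _ _).trans (Real.rpow_le_rpow hlo.le h1 hγ),
      (Real.rpow_le_rpow hx.le h2 hγ).trans (le_max_right _ _)⟩
  · exact ⟨(min_le_right _ _).trans (Real.rpow_le_rpow_of_nonpos hx h2 hγ.le),
      (Real.rpow_le_rpow_of_nonpos hlo h1 hγ.le).trans (le_max_left _ _)⟩

-- ∑ j^k t^j ≤ k! (2/(1-t))^k * (2/(1-t))
lemma auxE7 (k : ℕ) {t : ℝ} (h0 : 0 < t) (h1 : t < 1) (F : Finset ℕ) :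
    ∑ j ∈ F, (j:ℝ) ^ k * t ^ j ≤ (Nat.factorial k : ℝ) * (2/(1-t)) ^ k * (2/(1-t)) := by
  set s : ℝ := 1 - t with hs
  have hs0 : 0 < s := by rw [hs]; linarith
  set r : ℝ := Real.sqrt t with hr
  have hr0 : 0 < r := Real.sqrt_pos.mpr h0
  have hr1 : r < 1 := by
    rw [hr]; rw [show (1:ℝ) = Real.sqrt 1 by simp]; exact Real.sqrt_lt_sqrt h0.le h1
  have hrt : r * r = t := Real.mul_self_sqrt h0.le
  have hsr : s ≤ 2 * (1 - r) := by nlinarith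
  set L : ℝ := -Real.log r with hL
  have hL0 : 0 < L := by rw [hL]; simp; exact Real.log_neg hr0 hr1
  have hLs : s / 2 ≤ L := by
    have := Real.log_le_sub_one_of_pos hr0
    rw [hL]; linarith
  -- pointwise : j^k * r^j ≤ k! / L^k
  have hpt : ∀ j : ℕ, (j:ℝ) ^ k * r ^ j ≤ (Nat.factorial k : ℝ) / L ^ k := by
    intro j
    have hrj : r ^ j = Real.exp (-(j * L)) := by
      rw [hL, show -((j:ℝ) * -Real.log r) = (j:ℝ) * Real.log r by ring,
        ← Real.log_pow, Real.exp_log (by positivity)]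
    have h5 := auxE5 k (show (0:ℝ) ≤ (j:ℝ) * L by positivity)
    have hLk : (0:ℝ) < L ^ k := by positivity
    have hexp : ((j:ℝ) * L) ^ k = (j:ℝ)^k * L^k := mul_pow _ _ _
    rw [hexp] at h5
    rw [hrj]
    rw [div_eq_inv_mul, ← mul_le_mul_iff_of_pos_left hLk]
    calc L ^ k * ((j:ℝ)^k * Real.exp (-((j:ℝ)*L))) = (j:ℝ)^k * L^k * Real.exp (-((j:ℝ)*L)) := by ring
      _ ≤ (Nat.factorial k : ℝ) := h5
      _ = L ^ k * ((L^k)⁻¹ * (Nat.factorial k : ℝ)) := by field_simp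
  have hLinv : (Nat.factorial k : ℝ) / L ^ k ≤ (Nat.factorial k : ℝ) * (2/s) ^ k := by
    rw [div_eq_mul_inv]
    apply mul_le_mul_of_nonneg_left _ (by positivity)
    rw [← inv_pow]
    apply pow_le_pow_left₀ (by positivity)
    rw [inv_le_comm₀ hL0 (by positivity)]
    rw [inv_div]
    linarith [hLs]
  calc ∑ j ∈ F, (j:ℝ) ^ k * t ^ j = ∑ j ∈ F, ((j:ℝ) ^ k * r ^ j) * r ^ j := by
        apply Finset.sum_congr rfl; intro j _
        rw [← hrt, mul_pow]; ring
    _ ≤ ∑ j ∈ F, ((Nat.factorial k : ℝ) * (2/s) ^ k) * r ^ j := by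
        apply Finset.sum_le_sum; intro j _
        apply mul_le_mul_of_nonneg_right _ (by positivity)
        exact le_trans (hpt j) hLinv
    _ = ((Nat.factorial k : ℝ) * (2/s) ^ k) * ∑ j ∈ F, r ^ j := by rw [← Finset.mul_sum]
    _ ≤ ((Nat.factorial k : ℝ) * (2/s) ^ k) * (1 - r)⁻¹ := by
        apply mul_le_mul_of_nonneg_left (auxE4 hr0.le hr1 F) (by positivity)
    _ ≤ ((Nat.factorial k : ℝ) * (2/s) ^ k) * (2/s) := by
        apply mul_le_mul_of_nonneg_left _ (by positivity)
        rw [inv_le_comm₀ (by linarith) (by positivity)]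
        rw [inv_div]
        linarith

-- δ^s ≤ 1 - s on [0, 1 - 1/C]
lemma auxD {C : ℝ} (hC : 1 < C) : ∃ δ : ℝ, 0 < δ ∧ δ < 1 ∧
    ∀ s : ℝ, 0 ≤ s → s ≤ 1 - 1/C → δ ^ s ≤ 1 - s := by
  have hC0 : (0:ℝ) < C := by linarith
  set b : ℝ := 1 - 1/C with hb
  have hb0 : 0 < b := by
    have : 1/C < 1 := by rw [div_lt_one hC0]; exact hC
    rw [hb]; rw [sub_pos]; rw [div_lt_one hC0]; exact hC
  set L : ℝ := Real.log (1/C) / b with hL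
  refine ⟨Real.exp L, Real.exp_pos L, ?_, ?_⟩
  · have hlog : Real.log (1/C) < 0 := Real.log_neg (by positivity) (by rw [div_lt_one hC0]; exact hC)
    have : L < 0 := div_neg_of_neg_of_pos hlog hb0
    calc Real.exp L < Real.exp 0 := Real.exp_lt_exp.mpr this
      _ = 1 := Real.exp_zero
  · intro s hs0 hsb
    have hrw : Real.exp L ^ s = Real.exp (L * s) := by
      rw [← Real.exp_mul]
    rw [hrw]
    set lam : ℝ := s / b with hlam
    have hlam0 : 0 ≤ lam := by positivity
    have hlam1 : lam ≤ 1 := by rw [hlam, div_le_one hb0]; exact hsb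
    have hconv := convexOn_exp.2 (Set.mem_univ (0:ℝ)) (Set.mem_univ (b * L))
      (by linarith : (0:ℝ) ≤ 1 - lam) hlam0 (by ring)
    have h1 : (1 - lam) • (0:ℝ) + lam • (b * L) = L * s := by
      simp [smul_eq_mul, hlam]; field_simp
    have h2 : Real.exp (b * L) = 1/C := by
      rw [hL]; rw [mul_div_cancel₀ _ hb0.ne']; exact Real.exp_log (by positivity)
    rw [h1] at hconv
    have : Real.exp (L * s) ≤ (1 - lam) * Real.exp 0 + lam * Real.exp (b * L) := hconv
    rw [Real.exp_zero, h2] at this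
    have h3 : (1 - lam) * 1 + lam * (1/C) = 1 - lam * b := by
      rw [hb]; ring
    rw [h3] at this
    have h4 : lam * b = s := by rw [hlam]; field_simp
    rw [h4] at this
    exact this

-- x^a ≤ 1 + x^⌈a⌉₊
lemma auxE8 {a : ℝ} (ha : 0 ≤ a) {x : ℝ} (hx : 0 ≤ x) : x ^ a ≤ 1 + x ^ (⌈a⌉₊ : ℕ) := by
  rcases le_or_gt x 1 with h | h
  · have : x ^ a ≤ 1 := Real.rpow_le_one hx h ha
    have : (0:ℝ) ≤ x ^ (⌈a⌉₊:ℕ) := by positivity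
    linarith [Real.rpow_le_one hx h ha]
  · have h1 : x ^ a ≤ x ^ ((⌈a⌉₊ : ℕ) : ℝ) :=
      Real.rpow_le_rpow_of_exponent_le h.le (Nat.le_ceil a)
    rw [Real.rpow_natCast] at h1
    have : (0:ℝ) ≤ 1 := zero_le_one
    linarith

lemma auxG (α : ℝ) (hα : -1 < α) : ∃ K : ℝ, 0 < K ∧ ∀ N : ℕ, ∀ t : ℝ, 0 < t → t < 1 →
    ∑ j ∈ Icc 1 N, (j:ℝ) ^ α * t ^ j ≤ K * (1-t) ^ (-(α+1)) := by
  obtain ⟨Kh, hKh0, hKh⟩ := auxE1 α hα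
  set k : ℕ := ⌈α⌉₊ with hk
  set K : ℝ := Kh * 2^(α+1) + 2^(α+1) + ((Nat.factorial k : ℝ) * 2^(k+1) + 1) with hK
  have h2a : (0:ℝ) < 2 ^ (α+1) := Real.rpow_pos_of_pos two_pos _
  have hK0 : 0 < K := by positivity
  refine ⟨K, hK0, fun N t ht0 ht1 => ?_⟩
  set s : ℝ := 1 - t with hs
  have hs0 : 0 < s := by rw [hs]; linarith
  have hs1 : s < 1 := by rw [hs]; linarith
  set u : ℝ := s⁻¹ with hu
  have hu1 : 1 < u := by rw [hu]; exact one_lt_inv₀ hs0 |>.mpr hs1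
  have hu0 : 0 < u := by linarith
  set J : ℕ := ⌈u⌉₊ with hJ
  have hJu : u ≤ (J:ℝ) := Nat.le_ceil u
  have hJ2u : (J:ℝ) ≤ 2 * u := by
    have := Nat.ceil_lt_add_one hu0.le
    rw [← hJ] at this; linarith
  -- final target form
  have hconv : (1-t) ^ (-(α+1)) = u ^ (α+1) := by
    rw [← hs, hu, Real.rpow_neg hs0.le, ← Real.inv_rpow hs0.le]
  rw [hconv]
  have hmr : (2 * u) ^ (α + 1) = 2 ^ (α+1) * u ^ (α+1) := Real.mul_rpow two_pos.le hu0.le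
  have hterm_nonneg : ∀ j : ℕ, 0 ≤ (j:ℝ) ^ α * t ^ j := fun j => by positivity
  have hsplit := Finset.sum_filter_add_sum_filter_not (Icc 1 N) (fun j => j ≤ J)
    (fun j => (j:ℝ) ^ α * t ^ j)
  have hhead : ∑ j ∈ (Icc 1 N).filter (fun j => j ≤ J), (j:ℝ) ^ α * t ^ j
      ≤ ∑ j ∈ Icc 1 J, (j:ℝ) ^ α * t ^ j := by
    apply Finset.sum_le_sum_of_subset_of_nonneg
    · intro j hj
      rcases Finset.mem_filter.mp hj with ⟨hj1, hj2⟩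
      rcases Finset.mem_Icc.mp hj1 with ⟨hj3, _⟩
      exact Finset.mem_Icc.mpr ⟨hj3, hj2⟩
    · intro j _ _; exact hterm_nonneg j
  have hupow : 0 < u ^ (α+1) := Real.rpow_pos_of_pos hu0 _
  -- head bound
  have hhead2 : ∑ j ∈ Icc 1 J, (j:ℝ) ^ α * t ^ j ≤ (Kh * 2^(α+1) + 2^(α+1)) * u ^ (α+1) := by
    rcases le_or_gt 0 α with hα0 | hα0
    · -- α ≥ 0 : per-term ≤ J^α, count J
      have hstep : ∑ j ∈ Icc 1 J, (j:ℝ) ^ α * t ^ j ≤ (J:ℝ) * (J:ℝ) ^ α := by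
        calc ∑ j ∈ Icc 1 J, (j:ℝ) ^ α * t ^ j ≤ ∑ _j ∈ Icc 1 J, (J:ℝ) ^ α := by
              apply Finset.sum_le_sum; intro j hj
              rcases Finset.mem_Icc.mp hj with ⟨h1, h2⟩
              have : (j:ℝ) ^ α ≤ (J:ℝ) ^ α :=
                Real.rpow_le_rpow (Nat.cast_nonneg j) (by exact_mod_cast h2) hα0
              have ht : t ^ j ≤ 1 := pow_le_one₀ ht0.le ht1.le
              calc (j:ℝ) ^ α * t ^ j ≤ (j:ℝ) ^ α * 1 :=
                    mul_le_mul_of_nonneg_left ht (by positivity)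
                _ = (j:ℝ) ^ α := mul_one _
                _ ≤ (J:ℝ) ^ α := this
          _ = (J:ℝ) * (J:ℝ) ^ α := by
              rw [Finset.sum_const, Nat.card_Icc]; simp [nsmul_eq_mul]
      have hJpos : (0:ℝ) < (J:ℝ) := lt_of_lt_of_le hu0 hJu
      have h2 : (J:ℝ) * (J:ℝ) ^ α = (J:ℝ) ^ (α+1) := by
        rw [Real.rpow_add_one hJpos.ne', mul_comm]
      have h3 : (J:ℝ) ^ (α+1) ≤ (2*u) ^ (α+1) :=
        Real.rpow_le_rpow (Nat.cast_nonneg J) hJ2u (by linarith)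
      have h4 : (0:ℝ) ≤ Kh * 2^(α+1) * u ^ (α+1) := by positivity
      rw [h2] at hstep
      calc ∑ j ∈ Icc 1 J, (j:ℝ) ^ α * t ^ j ≤ (2*u) ^ (α+1) := le_trans hstep h3
        _ = 2^(α+1) * u ^ (α+1) := hmr
        _ ≤ (Kh * 2^(α+1) + 2^(α+1)) * u ^ (α+1) := by nlinarith
    · -- α < 0 : t^j ≤ 1, use head sum lemma
      have hstep : ∑ j ∈ Icc 1 J, (j:ℝ) ^ α * t ^ j ≤ ∑ j ∈ Icc 1 J, (j:ℝ) ^ α := by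
        apply Finset.sum_le_sum; intro j hj
        have ht : t ^ j ≤ 1 := pow_le_one₀ ht0.le ht1.le
        calc (j:ℝ) ^ α * t ^ j ≤ (j:ℝ) ^ α * 1 := mul_le_mul_of_nonneg_left ht (by positivity)
          _ = (j:ℝ) ^ α := mul_one _
      have h3 : (J:ℝ) ^ (α+1) ≤ (2*u) ^ (α+1) :=
        Real.rpow_le_rpow (Nat.cast_nonneg J) hJ2u (by linarith)
      have h4 : (0:ℝ) ≤ 2^(α+1) * u ^ (α+1) := by positivity
      calc ∑ j ∈ Icc 1 J, (j:ℝ) ^ α * t ^ j ≤ Kh * (J:ℝ) ^ (α+1) := le_trans hstep (hKh J)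
        _ ≤ Kh * (2*u) ^ (α+1) := mul_le_mul_of_nonneg_left h3 hKh0.le
        _ = Kh * 2^(α+1) * u ^ (α+1) := by rw [hmr]; ring
        _ ≤ (Kh * 2^(α+1) + 2^(α+1)) * u ^ (α+1) := by nlinarith
  -- tail bound
  have htail : ∑ j ∈ (Icc 1 N).filter (fun j => ¬ j ≤ J), (j:ℝ) ^ α * t ^ j
      ≤ ((Nat.factorial k : ℝ) * 2^(k+1) + 1) * u ^ (α+1) := by
    set T := (Icc 1 N).filter (fun j => ¬ j ≤ J) with hT
    have hTj : ∀ j ∈ T, (J:ℝ) ≤ (j:ℝ) ∧ 1 ≤ j := by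
      intro j hj
      rcases Finset.mem_filter.mp hj with ⟨hj1, hj2⟩
      have : J < j := Nat.lt_of_not_le hj2
      exact ⟨by exact_mod_cast this.le, (Finset.mem_Icc.mp hj1).1⟩
    rcases le_or_gt 0 α with hα0 | hα0
    · -- α ≥ 0
      have hαk : α - (k:ℝ) ≤ 0 := by
        have := Nat.le_ceil α; rw [← hk] at this; linarith
      have hpt : ∀ j ∈ T, (j:ℝ) ^ α * t ^ j ≤ u ^ (α - k) * ((j:ℝ) ^ k * t ^ j) := by
        intro j hj
        obtain ⟨hjJ, hj1⟩ := hTj j hj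
        have hj0 : (0:ℝ) < (j:ℝ) := by exact_mod_cast hj1
        have hdecomp : (j:ℝ) ^ α = (j:ℝ) ^ (α - k) * (j:ℝ) ^ (k:ℕ) := by
          rw [← Real.rpow_natCast (j:ℝ) k, ← Real.rpow_add hj0]; ring_nf
        have hmono : (j:ℝ) ^ (α - (k:ℝ)) ≤ u ^ (α - (k:ℝ)) :=
          Real.rpow_le_rpow_of_nonpos hu0 (le_trans hJu hjJ) hαk
        rw [hdecomp]
        have : (0:ℝ) ≤ (j:ℝ) ^ (k:ℕ) * t ^ j := by positivity
        calc (j:ℝ) ^ (α - (k:ℝ)) * (j:ℝ) ^ (k:ℕ) * t ^ j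
            ≤ u ^ (α - (k:ℝ)) * (j:ℝ) ^ (k:ℕ) * t ^ j := by
              apply mul_le_mul_of_nonneg_right _ (pow_nonneg ht0.le j)
              exact mul_le_mul_of_nonneg_right hmono (by positivity)
          _ = u ^ (α - k) * ((j:ℝ) ^ k * t ^ j) := by ring
      have hsum : ∑ j ∈ T, (j:ℝ) ^ α * t ^ j ≤ u ^ (α - k) * ∑ j ∈ T, ((j:ℝ) ^ k * t ^ j) := by
        rw [Finset.mul_sum]; exact Finset.sum_le_sum hpt
      have h7 := auxE7 k ht0 ht1 T
      have h2u : 2 / (1 - t) = 2 * u := by rw [← hs, hu]; ring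
      rw [h2u] at h7
      have hge : (0:ℝ) ≤ u ^ (α - k) := (Real.rpow_pos_of_pos hu0 _).le
      have hfin : u ^ (α - k) * ((Nat.factorial k : ℝ) * (2*u)^k * (2*u))
          = (Nat.factorial k : ℝ) * 2^(k+1) * u ^ (α + 1) := by
        rw [mul_pow]
        have e1 : u ^ (α - k) * ((Nat.factorial k : ℝ) * (2^k * u^k) * (2*u))
            = (Nat.factorial k : ℝ) * 2^(k+1) * (u ^ (α - k) * u^k * u) := by ring
        rw [e1]
        congr 1
        rw [← Real.rpow_natCast u k, ← Real.rpow_add hu0, ← Real.rpow_add_one hu0.ne']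
        ring_nf
      calc ∑ j ∈ T, (j:ℝ) ^ α * t ^ j ≤ u ^ (α - k) * ∑ j ∈ T, ((j:ℝ) ^ k * t ^ j) := hsum
        _ ≤ u ^ (α - k) * ((Nat.factorial k : ℝ) * (2*u)^k * (2*u)) :=
            mul_le_mul_of_nonneg_left h7 hge
        _ = (Nat.factorial k : ℝ) * 2^(k+1) * u ^ (α + 1) := hfin
        _ ≤ ((Nat.factorial k : ℝ) * 2^(k+1) + 1) * u ^ (α+1) := by nlinarith
    · -- α < 0 : j^α ≤ u^α
      have hpt : ∀ j ∈ T, (j:ℝ) ^ α * t ^ j ≤ u ^ α * t ^ j := by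
        intro j hj
        obtain ⟨hjJ, hj1⟩ := hTj j hj
        have hmono : (j:ℝ) ^ α ≤ u ^ α :=
          Real.rpow_le_rpow_of_nonpos hu0 (le_trans hJu hjJ) hα0.le
        exact mul_le_mul_of_nonneg_right hmono (pow_nonneg ht0.le j)
      have hsum : ∑ j ∈ T, (j:ℝ) ^ α * t ^ j ≤ u ^ α * ∑ j ∈ T, t ^ j := by
        rw [Finset.mul_sum]; exact Finset.sum_le_sum hpt
      have hgeo := auxE4 ht0.le ht1 T
      have hge : (0:ℝ) ≤ u ^ α := (Real.rpow_pos_of_pos hu0 _).le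
      have e2 : (1 - t)⁻¹ = u := by rw [hu, hs]
      have hfin : u ^ α * u = u ^ (α + 1) := by rw [← Real.rpow_add_one hu0.ne']
      calc ∑ j ∈ T, (j:ℝ) ^ α * t ^ j ≤ u ^ α * ∑ j ∈ T, t ^ j := hsum
        _ ≤ u ^ α * u := by rw [← e2]; exact mul_le_mul_of_nonneg_left hgeo hge
        _ = u ^ (α+1) := hfin
        _ ≤ ((Nat.factorial k : ℝ) * 2^(k+1) + 1) * u ^ (α+1) := by
            have hcc : (0:ℝ) ≤ (Nat.factorial k : ℝ) * 2^(k+1) := by positivity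
            exact le_mul_of_one_le_left hupow.le (by linarith)
  calc ∑ j ∈ Icc 1 N, (j:ℝ) ^ α * t ^ j
      = ∑ j ∈ (Icc 1 N).filter (fun j => j ≤ J), (j:ℝ) ^ α * t ^ j
        + ∑ j ∈ (Icc 1 N).filter (fun j => ¬ j ≤ J), (j:ℝ) ^ α * t ^ j := hsplit.symm
    _ ≤ (Kh * 2^(α+1) + 2^(α+1)) * u ^ (α+1) + ((Nat.factorial k : ℝ) * 2^(k+1) + 1) * u ^ (α+1) :=
        add_le_add (le_trans hhead hhead2) htail
    _ = K * u ^ (α+1) := by rw [hK]; ring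

lemma auxMid (γ : ℝ) {n : ℕ} (hn : 1 ≤ n) {x : ℝ} (h1 : (n:ℝ)/2 ≤ x) (h2 : x ≤ (n:ℝ)) :
    min 1 ((2:ℝ)^(-γ)) * (n:ℝ)^γ ≤ x ^ γ ∧ x ^ γ ≤ max 1 ((2:ℝ)^(-γ)) * (n:ℝ)^γ := by
  have hn0 : (0:ℝ) < (n:ℝ) := by exact_mod_cast hn
  have hhalf : (0:ℝ) < (n:ℝ)/2 := by linarith
  obtain ⟨hmin, hmax⟩ := auxE6 γ hhalf h1 h2
  have he : ((n:ℝ)/2)^γ = (2:ℝ)^(-γ) * (n:ℝ)^γ := by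
    rw [div_eq_mul_inv, Real.mul_rpow hn0.le (by positivity), Real.inv_rpow two_pos.le,
      ← Real.rpow_neg two_pos.le]
    ring
  have hnγ : (0:ℝ) ≤ (n:ℝ)^γ := Real.rpow_nonneg hn0.le γ
  constructor
  · refine le_trans (le_min ?_ ?_) hmin
    · rw [he]; exact mul_le_mul_of_nonneg_right (min_le_right _ _) hnγ
    · calc min 1 ((2:ℝ)^(-γ)) * (n:ℝ)^γ ≤ 1 * (n:ℝ)^γ :=
            mul_le_mul_of_nonneg_right (min_le_left _ _) hnγ
        _ = (n:ℝ)^γ := one_mul _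
  · refine le_trans hmax (max_le ?_ ?_)
    · rw [he]; exact mul_le_mul_of_nonneg_right (le_max_right _ _) hnγ
    · calc (n:ℝ)^γ = 1 * (n:ℝ)^γ := (one_mul _).symm
        _ ≤ max 1 ((2:ℝ)^(-γ)) * (n:ℝ)^γ := mul_le_mul_of_nonneg_right (le_max_left _ _) hnγ

lemma upperMain (α β : ℝ) (hα : -1 < α) (hβ : -1 < β) :
    ∃ K : ℝ, 0 < K ∧ ∀ n : ℕ, 1 ≤ n → ∀ t : ℝ, 0 < t → t < 1 →
      ∑ j ∈ Icc 1 n, ((n:ℝ)+1-(j:ℝ))^β * (j:ℝ)^α * t^j ≤ K * (n:ℝ)^β * (1-t)^(-(α+1)) := by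
  obtain ⟨KG, hKG0, hKG⟩ := auxG α hα
  obtain ⟨Kh, hKh0, hKh⟩ := auxE1 β hβ
  set k : ℕ := ⌈α+1⌉₊ with hkdef
  set Mβ : ℝ := max 1 ((2:ℝ)^(-β)) with hMβ
  set Mα : ℝ := max 1 ((2:ℝ)^(-α)) with hMα
  have hMβ0 : 0 < Mβ := lt_of_lt_of_le one_pos (le_max_left _ _)
  have hMα0 : 0 < Mα := lt_of_lt_of_le one_pos (le_max_left _ _)
  set E : ℝ := (2:ℝ)^(α+1) * (1 + (Nat.factorial k : ℝ)) with hE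
  have hE0 : 0 < E := by positivity
  refine ⟨Mβ * KG + Mα * Kh * E, by positivity, fun n hn t ht0 ht1 => ?_⟩
  set s : ℝ := 1 - t with hs
  have hs0 : 0 < s := by rw [hs]; linarith
  have hn0 : (0:ℝ) < (n:ℝ) := by exact_mod_cast hn
  set h : ℕ := (n+1)/2 with hh
  have hhn : h ≤ n := by omega
  have hhreal : (n:ℝ)/2 ≤ (h:ℝ) := by
    have : n + 1 ≤ 2 * h + 1 := by omega
    have h2 : (n:ℝ) + 1 ≤ 2 * (h:ℝ) + 1 := by exact_mod_cast this
    linarith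
  have hhreal2 : (h:ℝ) ≤ ((n:ℝ)+1)/2 := by
    have : 2 * h ≤ n + 1 := by omega
    have h2 : 2 * (h:ℝ) ≤ (n:ℝ) + 1 := by exact_mod_cast this
    linarith
  have hsumsplit : ∑ j ∈ Ioc 0 h, ((n:ℝ)+1-(j:ℝ))^β * (j:ℝ)^α * t^j
      + ∑ j ∈ Ioc h n, ((n:ℝ)+1-(j:ℝ))^β * (j:ℝ)^α * t^j
      = ∑ j ∈ Icc 1 n, ((n:ℝ)+1-(j:ℝ))^β * (j:ℝ)^α * t^j := by
    rw [show Icc 1 n = Ioc 0 n from (Finset.Icc_succ_left_eq_Ioc 0 n)]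
    exact Finset.sum_Ioc_consecutive _ (Nat.zero_le h) hhn
  have hIoc0h : Ioc 0 h = Icc 1 h := (Finset.Icc_succ_left_eq_Ioc 0 h).symm
  have hsnn : (0:ℝ) ≤ (n:ℝ)^β := Real.rpow_nonneg hn0.le β
  have hrnn : (0:ℝ) < (1-t)^(-(α+1)) := Real.rpow_pos_of_pos (by linarith) _
  -- S1 bound
  have hS1 : ∑ j ∈ Ioc 0 h, ((n:ℝ)+1-(j:ℝ))^β * (j:ℝ)^α * t^j
      ≤ Mβ * KG * ((n:ℝ)^β * (1-t)^(-(α+1))) := by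
    rw [hIoc0h]
    have hstep : ∑ j ∈ Icc 1 h, ((n:ℝ)+1-(j:ℝ))^β * (j:ℝ)^α * t^j
        ≤ ∑ j ∈ Icc 1 h, Mβ * (n:ℝ)^β * ((j:ℝ)^α * t^j) := by
      apply Finset.sum_le_sum
      intro j hj
      rcases Finset.mem_Icc.mp hj with ⟨hj1, hj2⟩
      have hj1R : (1:ℝ) ≤ (j:ℝ) := by exact_mod_cast hj1
      have hj2R : (j:ℝ) ≤ (h:ℝ) := by exact_mod_cast hj2
      have hx1 : (n:ℝ)/2 ≤ (n:ℝ)+1-(j:ℝ) := by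
        have : (j:ℝ) ≤ ((n:ℝ)+1)/2 := le_trans hj2R hhreal2
        linarith
      have hx2 : (n:ℝ)+1-(j:ℝ) ≤ (n:ℝ) := by linarith
      have hb := (auxMid β hn hx1 hx2).2
      rw [← hMβ] at hb
      have : (0:ℝ) ≤ (j:ℝ)^α * t^j := by positivity
      calc ((n:ℝ)+1-(j:ℝ))^β * (j:ℝ)^α * t^j = ((n:ℝ)+1-(j:ℝ))^β * ((j:ℝ)^α * t^j) := by ring
        _ ≤ Mβ * (n:ℝ)^β * ((j:ℝ)^α * t^j) := mul_le_mul_of_nonneg_right hb this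
    calc ∑ j ∈ Icc 1 h, ((n:ℝ)+1-(j:ℝ))^β * (j:ℝ)^α * t^j
        ≤ ∑ j ∈ Icc 1 h, Mβ * (n:ℝ)^β * ((j:ℝ)^α * t^j) := hstep
      _ = Mβ * (n:ℝ)^β * ∑ j ∈ Icc 1 h, (j:ℝ)^α * t^j := by rw [← Finset.mul_sum]
      _ ≤ Mβ * (n:ℝ)^β * (KG * (1-t)^(-(α+1))) := by
          apply mul_le_mul_of_nonneg_left (hKG h t ht0 ht1) (by positivity)
      _ = Mβ * KG * ((n:ℝ)^β * (1-t)^(-(α+1))) := by ring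
  -- S2 bound
  have hS2 : ∑ j ∈ Ioc h n, ((n:ℝ)+1-(j:ℝ))^β * (j:ℝ)^α * t^j
      ≤ Mα * Kh * E * ((n:ℝ)^β * (1-t)^(-(α+1))) := by
    have hstep : ∑ j ∈ Ioc h n, ((n:ℝ)+1-(j:ℝ))^β * (j:ℝ)^α * t^j
        ≤ ∑ j ∈ Ioc h n, Mα * (n:ℝ)^α * t^h * ((n:ℝ)+1-(j:ℝ))^β := by
      apply Finset.sum_le_sum
      intro j hj
      rcases Finset.mem_Ioc.mp hj with ⟨hj1, hj2⟩
      have hj1R : (h:ℝ) < (j:ℝ) := by exact_mod_cast hj1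
      have hj2R : (j:ℝ) ≤ (n:ℝ) := by exact_mod_cast hj2
      have hx1 : (n:ℝ)/2 ≤ (j:ℝ) := le_trans hhreal hj1R.le
      have hb := (auxMid α hn hx1 hj2R).2
      rw [← hMα] at hb
      have htj : t^j ≤ t^h := pow_le_pow_of_le_one ht0.le ht1.le hj1.le
      have hxβ : (0:ℝ) ≤ ((n:ℝ)+1-(j:ℝ))^β := by
        apply Real.rpow_nonneg; linarith
      have htjn : (0:ℝ) ≤ t^j := pow_nonneg ht0.le j
      have hjα : (0:ℝ) ≤ (j:ℝ)^α := Real.rpow_nonneg (Nat.cast_nonneg j) α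
      calc ((n:ℝ)+1-(j:ℝ))^β * (j:ℝ)^α * t^j
          ≤ ((n:ℝ)+1-(j:ℝ))^β * (Mα * (n:ℝ)^α) * t^j := by
            apply mul_le_mul_of_nonneg_right _ htjn
            exact mul_le_mul_of_nonneg_left hb hxβ
        _ ≤ ((n:ℝ)+1-(j:ℝ))^β * (Mα * (n:ℝ)^α) * t^h := by
            apply mul_le_mul_of_nonneg_left htj
            have : (0:ℝ) ≤ (n:ℝ)^α := Real.rpow_nonneg hn0.le α
            positivity
        _ = Mα * (n:ℝ)^α * t^h * ((n:ℝ)+1-(j:ℝ))^β := by ring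
    -- reindex the β-sum
    have hre : ∑ j ∈ Ioc h n, ((n:ℝ)+1-(j:ℝ))^β ≤ Kh * (n:ℝ)^(β+1) := by
      have hcast : ∀ j ∈ Ioc h n, ((n:ℝ)+1-(j:ℝ))^β = (((n+1-j : ℕ)):ℝ)^β := by
        intro j hj
        rcases Finset.mem_Ioc.mp hj with ⟨_, hj2⟩
        have : ((n+1-j : ℕ) : ℝ) = (n:ℝ)+1-(j:ℝ) := by
          have hle : j ≤ n + 1 := by omega
          push_cast [Nat.cast_sub hle]
          ring
        rw [this]
      rw [Finset.sum_congr rfl hcast]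
      have himg : ∑ j ∈ Ioc h n, (((n+1-j : ℕ)):ℝ)^β
          = ∑ i ∈ (Ioc h n).image (fun j => n+1-j), (i:ℝ)^β := by
        rw [Finset.sum_image]
        intro x hx y hy hxy
        rcases Finset.mem_Ioc.mp hx with ⟨_, hx2⟩
        rcases Finset.mem_Ioc.mp hy with ⟨_, hy2⟩
        simp only at hxy
        omega
      rw [himg]
      have hsub : (Ioc h n).image (fun j => n+1-j) ⊆ Icc 1 n := by
        intro i hi
        rcases Finset.mem_image.mp hi with ⟨j, hj, rfl⟩
        rcases Finset.mem_Ioc.mp hj with ⟨hj1, hj2⟩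
        have hj1' : 1 ≤ j := by omega
        exact Finset.mem_Icc.mpr ⟨by omega, by omega⟩
      calc ∑ i ∈ (Ioc h n).image (fun j => n+1-j), (i:ℝ)^β
          ≤ ∑ i ∈ Icc 1 n, (i:ℝ)^β := by
            apply Finset.sum_le_sum_of_subset_of_nonneg hsub
            intro i _ _
            exact Real.rpow_nonneg (Nat.cast_nonneg i) β
        _ ≤ Kh * (n:ℝ)^(β+1) := hKh n
    -- exponential bound: n^α * t^h * n^(β+1) ≤ E * n^β * s^(-(α+1))
    have hexp : (n:ℝ)^α * t^h * (n:ℝ)^(β+1) ≤ E * ((n:ℝ)^β * (1-t)^(-(α+1))) := by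
      have hx : (0:ℝ) < (n:ℝ) * s / 2 := by positivity
      set x : ℝ := (n:ℝ) * s / 2 with hxd
      have hth : t^h ≤ Real.exp (-x) := by
        have h1 : t ≤ Real.exp (-s) := by
          have := Real.add_one_le_exp (-s)
          rw [hs]; linarith
        have h2 : t^h ≤ Real.exp (-s) ^ h := pow_le_pow_left₀ ht0.le h1 h
        have h3 : Real.exp (-s) ^ h = Real.exp ((h:ℝ) * (-s)) := (Real.exp_nat_mul _ h).symm
        rw [h3] at h2
        refine le_trans h2 (Real.exp_le_exp.mpr ?_)
        rw [hxd]
        nlinarith [hhreal, hs0]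
      have hkey : ((n:ℝ)*s)^(α+1) * Real.exp (-x) ≤ E := by
        have h2x : (n:ℝ)*s = 2*x := by rw [hxd]; ring
        rw [h2x, Real.mul_rpow two_pos.le hx.le]
        have h8 := auxE8 (show (0:ℝ) ≤ α+1 by linarith) hx.le
        have h5 := auxE5 k hx.le
        have hexple : Real.exp (-x) ≤ 1 := by
          rw [show (1:ℝ) = Real.exp 0 by simp]
          exact Real.exp_le_exp.mpr (by linarith)
        have hxk : (0:ℝ) ≤ x ^ (k:ℕ) := by positivity
        have hxa : (0:ℝ) ≤ x ^ (α+1) := Real.rpow_nonneg hx.le _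
        have hexpnn : (0:ℝ) ≤ Real.exp (-x) := Real.exp_nonneg _
        have h2p : (0:ℝ) < (2:ℝ)^(α+1) := Real.rpow_pos_of_pos two_pos _
        rw [hE]
        have step : x^(α+1) * Real.exp (-x) ≤ 1 + (Nat.factorial k : ℝ) := by
          calc x^(α+1) * Real.exp (-x) ≤ (1 + x^(k:ℕ)) * Real.exp (-x) :=
                mul_le_mul_of_nonneg_right h8 hexpnn
            _ = Real.exp (-x) + x^(k:ℕ) * Real.exp (-x) := by ring
            _ ≤ 1 + (Nat.factorial k : ℝ) := add_le_add hexple h5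
        calc (2:ℝ)^(α+1) * x^(α+1) * Real.exp (-x)
            = (2:ℝ)^(α+1) * (x^(α+1) * Real.exp (-x)) := by ring
          _ ≤ (2:ℝ)^(α+1) * (1 + (Nat.factorial k : ℝ)) :=
              mul_le_mul_of_nonneg_left step h2p.le
      -- now conclude
      have hsa : (0:ℝ) < s^(α+1) := Real.rpow_pos_of_pos hs0 _
      have hterm : (n:ℝ)^α * (n:ℝ)^(β+1) = (n:ℝ)^β * (n:ℝ)^(α+1) := by
        rw [← Real.rpow_add hn0, ← Real.rpow_add hn0]; ring_nf
      have hmulr : ((n:ℝ)*s)^(α+1) = (n:ℝ)^(α+1) * s^(α+1) := Real.mul_rpow hn0.le hs0.le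
      have hinv : (1-t)^(-(α+1)) = (s^(α+1))⁻¹ := by
        rw [← hs, Real.rpow_neg hs0.le]
      rw [hinv]
      have hfinal : (n:ℝ)^(α+1) * t^h * s^(α+1) ≤ E := by
        calc (n:ℝ)^(α+1) * t^h * s^(α+1) ≤ (n:ℝ)^(α+1) * Real.exp (-x) * s^(α+1) := by
              apply mul_le_mul_of_nonneg_right _ hsa.le
              exact mul_le_mul_of_nonneg_left hth (Real.rpow_nonneg hn0.le _)
          _ = ((n:ℝ)*s)^(α+1) * Real.exp (-x) := by rw [hmulr]; ring
          _ ≤ E := hkey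
      have hnb : (0:ℝ) < (n:ℝ)^β := Real.rpow_pos_of_pos hn0 β
      calc (n:ℝ)^α * t^h * (n:ℝ)^(β+1)
          = ((n:ℝ)^α * (n:ℝ)^(β+1)) * t^h * (s^(α+1) * (s^(α+1))⁻¹) := by
            rw [mul_inv_cancel₀ hsa.ne']; ring
        _ = ((n:ℝ)^β * ((n:ℝ)^(α+1) * t^h * s^(α+1))) * (s^(α+1))⁻¹ := by rw [hterm]; ring
        _ ≤ ((n:ℝ)^β * E) * (s^(α+1))⁻¹ := by
            apply mul_le_mul_of_nonneg_right _ (inv_nonneg.mpr hsa.le)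
            exact mul_le_mul_of_nonneg_left hfinal hnb.le
        _ = E * ((n:ℝ)^β * (s^(α+1))⁻¹) := by ring
    -- combine S2
    have htnn : (0:ℝ) ≤ t^h := pow_nonneg ht0.le h
    have hnα : (0:ℝ) ≤ (n:ℝ)^α := (Real.rpow_pos_of_pos hn0 α).le
    calc ∑ j ∈ Ioc h n, ((n:ℝ)+1-(j:ℝ))^β * (j:ℝ)^α * t^j
        ≤ ∑ j ∈ Ioc h n, Mα * (n:ℝ)^α * t^h * ((n:ℝ)+1-(j:ℝ))^β := hstep
      _ = Mα * (n:ℝ)^α * t^h * ∑ j ∈ Ioc h n, ((n:ℝ)+1-(j:ℝ))^β := by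
          rw [← Finset.mul_sum]
      _ ≤ Mα * (n:ℝ)^α * t^h * (Kh * (n:ℝ)^(β+1)) := by
          apply mul_le_mul_of_nonneg_left hre (by positivity)
      _ = Mα * Kh * ((n:ℝ)^α * t^h * (n:ℝ)^(β+1)) := by ring
      _ ≤ Mα * Kh * (E * ((n:ℝ)^β * (1-t)^(-(α+1)))) := by
          apply mul_le_mul_of_nonneg_left hexp (by positivity)
      _ = Mα * Kh * E * ((n:ℝ)^β * (1-t)^(-(α+1))) := by ring
  calc ∑ j ∈ Icc 1 n, ((n:ℝ)+1-(j:ℝ))^β * (j:ℝ)^α * t^j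
      = ∑ j ∈ Ioc 0 h, ((n:ℝ)+1-(j:ℝ))^β * (j:ℝ)^α * t^j
        + ∑ j ∈ Ioc h n, ((n:ℝ)+1-(j:ℝ))^β * (j:ℝ)^α * t^j := hsumsplit.symm
    _ ≤ Mβ * KG * ((n:ℝ)^β * (1-t)^(-(α+1))) + Mα * Kh * E * ((n:ℝ)^β * (1-t)^(-(α+1))) :=
        add_le_add hS1 hS2
    _ = (Mβ * KG + Mα * Kh * E) * (n:ℝ)^β * (1-t)^(-(α+1)) := by ring

lemma lowerMain (α β c C : ℝ) (hα : -1 < α) (hβ : -1 < β) (hc : 0 < c) (hC : 1 < C) :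
    ∃ K : ℝ, 0 < K ∧ ∀ n : ℕ, 1 ≤ n → ∀ t : ℝ, 1 / C ≤ t → t ≤ 1 - c / n →
      K * (n:ℝ)^β * (1-t)^(-(α+1)) ≤ ∑ j ∈ Icc 1 n, ((n:ℝ)+1-(j:ℝ))^β * (j:ℝ)^α * t^j := by
  have hC0 : (0:ℝ) < C := by linarith
  obtain ⟨δ, hδ0, hδ1, hδ⟩ := auxD hC
  obtain ⟨m₀, hm₀0, hm₀1, hm₀c⟩ : ∃ m₀ : ℝ, 0 < m₀ ∧ m₀ ≤ 1 ∧ m₀ ≤ c/8 :=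
    ⟨min 1 (c/8), lt_min one_pos (by positivity), min_le_left _ _, min_le_right _ _⟩
  obtain ⟨mα, hmα0, hmα1, hmα2⟩ : ∃ mα : ℝ, 0 < mα ∧ mα ≤ m₀ ^ α ∧ mα ≤ (4:ℝ) ^ α :=
    ⟨min (m₀ ^ α) ((4:ℝ) ^ α),
      lt_min (Real.rpow_pos_of_pos hm₀0 α) (Real.rpow_pos_of_pos four_pos α),
      min_le_left _ _, min_le_right _ _⟩
  obtain ⟨δ4, hδ40, hδ4le⟩ : ∃ δ4 : ℝ, 0 < δ4 ∧ ∀ y : ℝ, y ≤ 4 → δ4 ≤ δ ^ y :=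
    ⟨δ ^ (4:ℝ), Real.rpow_pos_of_pos hδ0 _,
      fun y hy => Real.rpow_le_rpow_of_exponent_ge hδ0 hδ1.le hy⟩
  obtain ⟨mβ, hmβ0, hmβle⟩ : ∃ mβ : ℝ, 0 < mβ ∧ mβ = min 1 ((2:ℝ)^(-β)) :=
    ⟨min 1 ((2:ℝ)^(-β)), lt_min one_pos (Real.rpow_pos_of_pos two_pos _), rfl⟩
  obtain ⟨K1, hK10, hK1⟩ : ∃ K1 : ℝ, 0 < K1 ∧ K1 = (1/C) * (c/8)^(α+1) :=
    ⟨_, mul_pos (by positivity) (Real.rpow_pos_of_pos (by positivity) _), rfl⟩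
  obtain ⟨K2, hK20, hK2⟩ : ∃ K2 : ℝ, 0 < K2 ∧ K2 = m₀ * mα * mβ * δ4 :=
    ⟨_, by positivity, rfl⟩
  refine ⟨min K1 K2, lt_min hK10 hK20, fun n hn t htC htn => ?_⟩
  set s : ℝ := 1 - t with hs
  have hn0 : (0:ℝ) < (n:ℝ) := by exact_mod_cast hn
  have hcn : 0 < c / (n:ℝ) := by positivity
  have hsn : c / (n:ℝ) ≤ s := by rw [hs]; linarith
  have hs0 : 0 < s := lt_of_lt_of_le hcn hsn
  have ht0 : 0 < t := lt_of_lt_of_le (by positivity) htC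
  have ht1 : t < 1 := by rw [hs] at hs0; linarith
  have hs1 : s < 1 := by rw [hs]; linarith
  have hsC : s ≤ 1 - 1/C := by rw [hs]; linarith
  have hδs : δ ^ s ≤ t := by
    have := hδ s hs0.le hsC
    have he : 1 - s = t := by rw [hs]; ring
    rwa [he] at this
  have hterm_nonneg : ∀ j ∈ Icc 1 n, 0 ≤ ((n:ℝ)+1-(j:ℝ))^β * (j:ℝ)^α * t^j := by
    intro j hj
    rcases Finset.mem_Icc.mp hj with ⟨hj1, hj2⟩
    have : (j:ℝ) ≤ (n:ℝ) := by exact_mod_cast hj2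
    have hx : (0:ℝ) ≤ (n:ℝ)+1-(j:ℝ) := by linarith
    have := Real.rpow_nonneg hx β
    positivity
  have hconv : s ^ (-(α+1)) = (s⁻¹) ^ (α+1) := by
    rw [Real.rpow_neg hs0.le, ← Real.inv_rpow hs0.le]
  have hnβ0 : (0:ℝ) < (n:ℝ)^β := Real.rpow_pos_of_pos hn0 β
  have hw0 : (0:ℝ) < s⁻¹ := by positivity
  have hwa0 : (0:ℝ) < (s⁻¹)^(α+1) := Real.rpow_pos_of_pos hw0 _
  rw [hconv]
  rcases lt_or_ge n 8 with hsmall | hbig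
  · -- small n : use the j = 1 term
    have hs8 : c/8 ≤ s := by
      refine le_trans ?_ hsn
      apply div_le_div_of_nonneg_left hc.le (by positivity)
      exact_mod_cast (by omega : n ≤ 8)
    have hc80 : (0:ℝ) < (c/8)^(α+1) := Real.rpow_pos_of_pos (by positivity) _
    have hsa : (c/8)^(α+1) ≤ s^(α+1) := Real.rpow_le_rpow (by positivity) hs8 (by linarith)
    have hinv : (s⁻¹)^(α+1) = (s^(α+1))⁻¹ := Real.inv_rpow hs0.le (α+1)
    have hK1b : K1 * (s⁻¹)^(α+1) ≤ 1/C := by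
      rw [hinv, hK1]
      have h1 : (s^(α+1))⁻¹ ≤ ((c/8)^(α+1))⁻¹ := inv_anti₀ hc80 hsa
      calc (1/C) * (c/8)^(α+1) * (s^(α+1))⁻¹ ≤ (1/C) * (c/8)^(α+1) * ((c/8)^(α+1))⁻¹ := by
            apply mul_le_mul_of_nonneg_left h1 (by positivity)
        _ = 1/C := by field_simp
    have h1mem : 1 ∈ Icc 1 n := Finset.mem_Icc.mpr ⟨le_refl 1, hn⟩
    have hsingle := Finset.single_le_sum hterm_nonneg h1mem
    have he : ((n:ℝ)+1-((1:ℕ):ℝ))^β * ((1:ℕ):ℝ)^α * t^(1:ℕ) = (n:ℝ)^β * t := by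
      norm_num [Real.one_rpow]
    rw [he] at hsingle
    calc (min K1 K2) * (n:ℝ)^β * (s⁻¹)^(α+1) ≤ K1 * (n:ℝ)^β * (s⁻¹)^(α+1) := by
          apply mul_le_mul_of_nonneg_right _ hwa0.le
          exact mul_le_mul_of_nonneg_right (min_le_left _ _) hnβ0.le
      _ = (K1 * (s⁻¹)^(α+1)) * (n:ℝ)^β := by ring
      _ ≤ (1/C) * (n:ℝ)^β := mul_le_mul_of_nonneg_right hK1b hnβ0.le
      _ ≤ t * (n:ℝ)^β := mul_le_mul_of_nonneg_right htC hnβ0.le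
      _ = (n:ℝ)^β * t := by ring
      _ ≤ ∑ j ∈ Icc 1 n, ((n:ℝ)+1-(j:ℝ))^β * (j:ℝ)^α * t^j := hsingle
  · -- big n : block argument
    have hn8 : (8:ℝ) ≤ (n:ℝ) := by exact_mod_cast hbig
    obtain ⟨u, huw, hun, hu1, humax⟩ : ∃ u : ℝ, u ≤ s⁻¹ ∧ u ≤ (n:ℝ)/8 ∧ 1 ≤ u ∧
        ∀ v : ℝ, v ≤ s⁻¹ → v ≤ (n:ℝ)/8 → v ≤ u := by
      refine ⟨min s⁻¹ ((n:ℝ)/8), min_le_left _ _, min_le_right _ _, le_min ?_ (by linarith),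
        fun v h1 h2 => le_min h1 h2⟩
      rw [le_inv_comm₀ one_pos hs0]; simpa using hs1.le
    have hu0 : 0 < u := lt_of_lt_of_le one_pos hu1
    obtain ⟨A, hAu, hA2u⟩ : ∃ A : ℕ, u ≤ (A:ℝ) ∧ (A:ℝ) ≤ 2*u := by
      refine ⟨⌈u⌉₊, Nat.le_ceil u, ?_⟩
      have := Nat.ceil_lt_add_one hu0.le
      linarith
    have hA1 : 1 ≤ A := by
      have : (1:ℝ) ≤ (A:ℝ) := le_trans hu1 hAu
      exact_mod_cast this
    have h2Areal : ((2*A : ℕ):ℝ) = 2*(A:ℝ) := by push_cast; ring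
    have h2An2 : ((2*A : ℕ):ℝ) ≤ (n:ℝ)/2 := by rw [h2Areal]; linarith
    have h2An : 2*A ≤ n := by
      have : ((2*A:ℕ):ℝ) ≤ (n:ℝ) := le_trans h2An2 (by linarith)
      exact_mod_cast this
    have hsub : Icc A (2*A) ⊆ Icc 1 n := Finset.Icc_subset_Icc hA1 h2An
    have hcns : c ≤ s * (n:ℝ) := (div_le_iff₀ hn0).mp hsn
    have hm0u : m₀ * s⁻¹ ≤ u := by
      apply humax
      · exact mul_le_of_le_one_left hw0.le hm₀1
      · have h1 : m₀ * s⁻¹ ≤ (c/8) * s⁻¹ := mul_le_mul_of_nonneg_right hm₀c hw0.le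
        have hsinv : s⁻¹ ≤ (n:ℝ)/c := by
          rw [inv_le_comm₀ hs0 (by positivity), inv_div]
          exact hsn
        have h2 : (c/8) * s⁻¹ ≤ (n:ℝ)/8 := by
          calc (c/8)*s⁻¹ ≤ (c/8)*((n:ℝ)/c) := mul_le_mul_of_nonneg_left hsinv (by positivity)
            _ = (n:ℝ)/8 := by field_simp
        linarith
    have hsu : u * s ≤ 1 := by
      calc u * s ≤ s⁻¹ * s := mul_le_mul_of_nonneg_right huw hs0.le
        _ = 1 := by field_simp
    have hwα0 : (0:ℝ) < (s⁻¹)^α := Real.rpow_pos_of_pos hw0 α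
    have hptwise : ∀ j ∈ Icc A (2*A),
        mβ*(n:ℝ)^β * (mα*(s⁻¹)^α) * δ4 ≤ ((n:ℝ)+1-(j:ℝ))^β * (j:ℝ)^α * t^j := by
      intro j hj
      rcases Finset.mem_Icc.mp hj with ⟨hj1, hj2⟩
      have hj1R : (A:ℝ) ≤ (j:ℝ) := by exact_mod_cast hj1
      have hj2R : (j:ℝ) ≤ ((2*A:ℕ):ℝ) := by exact_mod_cast hj2
      have hj2R' : (j:ℝ) ≤ 2*(A:ℝ) := by rwa [h2Areal] at hj2R
      have hjl : m₀ * s⁻¹ ≤ (j:ℝ) := le_trans hm0u (le_trans hAu hj1R)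
      have hjh : (j:ℝ) ≤ 4 * s⁻¹ := by
        have h4u : 2*(A:ℝ) ≤ 4*u := by linarith
        linarith
      have hjα : mα * (s⁻¹)^α ≤ (j:ℝ)^α := by
        have h6 := (auxE6 α (by positivity : (0:ℝ) < m₀ * s⁻¹) hjl hjh).1
        refine le_trans (le_min ?_ ?_) h6
        · rw [Real.mul_rpow hm₀0.le hw0.le]
          exact mul_le_mul_of_nonneg_right hmα1 hwα0.le
        · rw [Real.mul_rpow (by norm_num : (0:ℝ) ≤ 4) hw0.le]
          exact mul_le_mul_of_nonneg_right hmα2 hwα0.le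
      have hjt : δ4 ≤ t^j := by
        have h1 : t^(2*A) ≤ t^j := pow_le_pow_of_le_one ht0.le ht1.le hj2
        have h2 : (δ ^ s)^(2*A) ≤ t^(2*A) :=
          pow_le_pow_left₀ (Real.rpow_nonneg hδ0.le s) hδs (2*A)
        have h3 : (δ ^ s)^(2*A) = δ ^ (s * ((2*A:ℕ):ℝ)) := by
          rw [← Real.rpow_natCast (δ ^ s) (2*A), ← Real.rpow_mul hδ0.le]
        have h4 : s * ((2*A:ℕ):ℝ) ≤ 4 := by
          rw [h2Areal]
          have h5 : 2*(A:ℝ) ≤ 4*u := by linarith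
          calc s * (2*(A:ℝ)) ≤ s * (4*u) := mul_le_mul_of_nonneg_left h5 hs0.le
            _ = 4 * (u * s) := by ring
            _ ≤ 4 := by linarith
        calc δ4 ≤ δ ^ (s * ((2*A:ℕ):ℝ)) := hδ4le _ h4
          _ = (δ ^ s)^(2*A) := h3.symm
          _ ≤ t^(2*A) := h2
          _ ≤ t^j := h1
      have hxn2 : (j:ℝ) ≤ (n:ℝ)/2 := le_trans hj2R h2An2
      have hjβ : mβ * (n:ℝ)^β ≤ ((n:ℝ)+1-(j:ℝ))^β := by
        have hx1 : (n:ℝ)/2 ≤ (n:ℝ)+1-(j:ℝ) := by linarith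
        have hx2 : (n:ℝ)+1-(j:ℝ) ≤ (n:ℝ) := by
          have h9 : (1:ℝ) ≤ (j:ℝ) := by
            have : 1 ≤ j := le_trans hA1 hj1
            exact_mod_cast this
          linarith
        rw [hmβle]
        exact (auxMid β hn hx1 hx2).1
      have hxβnn : (0:ℝ) ≤ ((n:ℝ)+1-(j:ℝ))^β := Real.rpow_nonneg (by linarith) β
      have hjαnn : (0:ℝ) ≤ (j:ℝ)^α := Real.rpow_nonneg (Nat.cast_nonneg j) α
      calc mβ*(n:ℝ)^β * (mα*(s⁻¹)^α) * δ4
          ≤ (((n:ℝ)+1-(j:ℝ))^β * (j:ℝ)^α) * t^j := by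
            apply mul_le_mul _ hjt hδ40.le (by positivity)
            exact mul_le_mul hjβ hjα (by positivity) hxβnn
        _ = ((n:ℝ)+1-(j:ℝ))^β * (j:ℝ)^α * t^j := by ring
    have hcard : ((Icc A (2*A)).card : ℝ) = (A:ℝ) + 1 := by
      rw [Nat.card_Icc]
      have he9 : 2*A + 1 - A = A + 1 := by omega
      rw [he9]; push_cast; ring
    have hblock : ((A:ℝ)+1) * (mβ*(n:ℝ)^β * (mα*(s⁻¹)^α) * δ4)
        ≤ ∑ j ∈ Icc A (2*A), ((n:ℝ)+1-(j:ℝ))^β * (j:ℝ)^α * t^j := by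
      have h10 := Finset.sum_le_sum hptwise
      rwa [Finset.sum_const, nsmul_eq_mul, hcard] at h10
    have hsum_ge : ∑ j ∈ Icc A (2*A), ((n:ℝ)+1-(j:ℝ))^β * (j:ℝ)^α * t^j
        ≤ ∑ j ∈ Icc 1 n, ((n:ℝ)+1-(j:ℝ))^β * (j:ℝ)^α * t^j :=
      Finset.sum_le_sum_of_subset_of_nonneg hsub (fun j hj _ => hterm_nonneg j hj)
    have hcount : m₀ * s⁻¹ ≤ (A:ℝ) + 1 := le_trans hm0u (le_trans hAu (by linarith))
    have hP0 : (0:ℝ) < mβ*(n:ℝ)^β * (mα*(s⁻¹)^α) * δ4 := by positivity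
    have hfin : (min K1 K2) * (n:ℝ)^β * (s⁻¹)^(α+1)
        ≤ (m₀ * s⁻¹) * (mβ*(n:ℝ)^β * (mα*(s⁻¹)^α) * δ4) := by
      have hwsum : (s⁻¹)^(α+1) = (s⁻¹)^α * s⁻¹ := Real.rpow_add_one hw0.ne' α
      calc (min K1 K2) * (n:ℝ)^β * (s⁻¹)^(α+1) ≤ K2 * (n:ℝ)^β * (s⁻¹)^(α+1) := by
            apply mul_le_mul_of_nonneg_right _ hwa0.le
            exact mul_le_mul_of_nonneg_right (min_le_right _ _) hnβ0.le
        _ = (m₀ * s⁻¹) * (mβ*(n:ℝ)^β * (mα*(s⁻¹)^α) * δ4) := by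
            rw [hK2, hwsum]; ring
    calc (min K1 K2) * (n:ℝ)^β * (s⁻¹)^(α+1)
        ≤ (m₀ * s⁻¹) * (mβ*(n:ℝ)^β * (mα*(s⁻¹)^α) * δ4) := hfin
      _ ≤ ((A:ℝ)+1) * (mβ*(n:ℝ)^β * (mα*(s⁻¹)^α) * δ4) :=
          mul_le_mul_of_nonneg_right hcount hP0.le
      _ ≤ ∑ j ∈ Icc A (2*A), ((n:ℝ)+1-(j:ℝ))^β * (j:ℝ)^α * t^j := hblock
      _ ≤ ∑ j ∈ Icc 1 n, ((n:ℝ)+1-(j:ℝ))^β * (j:ℝ)^α * t^j := hsum_ge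

theorem stmt_0 (α β c C : ℝ) (hα : -1 < α) (hβ : -1 < β) (hc : 0 < c) (hC : 1 < C) :
    ∃ c₁ c₂ : ℝ, 0 < c₁ ∧ 0 < c₂ ∧ ∀ n : ℕ, 1 ≤ n → ∀ t : ℝ, 1 / C ≤ t → t ≤ 1 - c / n →
      c₁ * (n : ℝ) ^ β * (1 - t) ^ (-(α + 1)) ≤
          ∑ j ∈ Finset.Icc 1 n, ((n : ℝ) + 1 - (j : ℝ)) ^ β * (j : ℝ) ^ α * t ^ j ∧
      ∑ j ∈ Finset.Icc 1 n, ((n : ℝ) + 1 - (j : ℝ)) ^ β * (j : ℝ) ^ α * t ^ j ≤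
          c₂ * (n : ℝ) ^ β * (1 - t) ^ (-(α + 1)) := by
  obtain ⟨c₁, hc₁, hlow⟩ := lowerMain α β c C hα hβ hc hC
  obtain ⟨c₂, hc₂, hup⟩ := upperMain α β hα hβ
  refine ⟨c₁, c₂, hc₁, hc₂, fun n hn t htC htn => ⟨hlow n hn t htC htn, ?_⟩⟩
  have hn0 : (0:ℝ) < (n:ℝ) := by exact_mod_cast hn
  have ht0 : 0 < t := lt_of_lt_of_le (by positivity) htC
  have ht1 : t < 1 := by
    have : 0 < c / (n:ℝ) := by positivity
    linarith
  exact hup n hn t ht0 ht1
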